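/- arXiv:2308.01242 — 2 statements merged into one kernel-verified Lean document; each statement's English description precedes it below -/
import Mathlib

section
/- A signed graph (G, σ) with no positive loop admits a balanced k-coloring if and only if the signed graph (G, -σ) admits a 0-free k-coloring. -/
/-- A signed (multi)graph: an edge set with endpoints (an unordered pair,
possibly a loop) and a sign for each edge (`neg e = true` means `e` is negative). -/
structure SGraph (V : Type) where
  E : Type
  ends : E → Sym2 V
  neg : E → Bool

namespace SGraph

variable {V W : Type}

/-- Walks in a signed multigraph, recorded as sequences of edges. -/
inductive Walk (G : SGraph V) : V → V → Type where
  | nil {v : V} : Walk G v v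
  | cons {u v w : V} (e : G.E) (h : G.ends e = s(u, v)) (p : Walk G v w) : Walk G u w

namespace Walk

variable {G : SGraph V}

/-- The list of edges of a walk. -/
def edges : {u v : V} → G.Walk u v → List G.E
  | _, _, .nil => []
  | _, _, .cons e _ p => e :: p.edges

/-- The list of vertices visited by a walk (in order, with repetitions). -/
def support : {u v : V} → G.Walk u v → List V
  | u, _, .nil => [u]
  | u, _, .cons _ _ p => u :: p.support

/-- A walk is negative if it uses an odd number of negative edges
(its sign, the product of the signs of its edges with multiplicity, is `-1`). -/
def isNeg {u v : V} (p : G.Walk u v) : Bool :=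
  (p.edges.map G.neg).foldr Bool.xor false

/-- A closed walk is a cycle if it has at least one edge, no repeated edge,
and no repeated vertex (except the initial vertex which is also final). -/
def IsCycle {v : V} (p : G.Walk v v) : Prop :=
  p.edges ≠ [] ∧ p.edges.Nodup ∧ p.support.tail.Nodup

/-- The internal vertices of a walk. -/
def inner {u v : V} (p : G.Walk u v) : List V :=
  p.support.tail.dropLast

end Walk

/-- A set of vertices is balanced if it induces no negative cycle. -/
def BalancedSet (G : SGraph V) (X : Set V) : Prop :=
  ∀ (v : V) (p : G.Walk v v), p.IsCycle → (∀ u ∈ p.support, u ∈ X) → p.isNeg = false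

/-- A signed graph is balanced if it contains no negative cycle. -/
def IsBalanced (G : SGraph V) : Prop := G.BalancedSet Set.univ

/-- The signed graph has a negative loop. -/
def HasNegLoop (G : SGraph V) : Prop :=
  ∃ e : G.E, (∃ v : V, G.ends e = s(v, v)) ∧ G.neg e = true

/-- The signed graph has a positive loop. -/
def HasPosLoop (G : SGraph V) : Prop :=
  ∃ e : G.E, (∃ v : V, G.ends e = s(v, v)) ∧ G.neg e = false

/-- A balanced `k`-coloring: a partition of the vertices into `k` balanced color classes. -/
def ColorableB (G : SGraph V) (k : ℕ) : Prop :=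
  ∃ c : V → Fin k, ∀ i : Fin k, G.BalancedSet {v | c v = i}

/-- The balanced chromatic number. -/
noncomputable def chromNumB (G : SGraph V) : ℕ∞ :=
  ⨅ n ∈ {n : ℕ | G.ColorableB n}, (n : ℕ∞)

/-- Switching at the set of vertices where `s` is `true`: the sign of an edge is
multiplied by `-1` once for each of its endpoints (with multiplicity) in the set;
thus an edge with exactly one endpoint in the set changes sign, and loops are unchanged. -/
def switch (G : SGraph V) (s : V → Bool) : SGraph V where
  E := G.E
  ends := G.ends
  neg e := Bool.xor (G.neg e)
    (Sym2.lift ⟨fun u v => Bool.xor (s u) (s v), fun u v => Bool.xor_comm _ _⟩ (G.ends e))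

/-- The negation of a signature. -/
def negate (G : SGraph V) : SGraph V where
  E := G.E
  ends := G.ends
  neg e := !(G.neg e)

/-- A set of vertices is connected via positive edges inside itself. -/
def PosConnected (G : SGraph V) (B : Set V) : Prop :=
  B.Nonempty ∧ ∀ u ∈ B, ∀ v ∈ B, ∃ p : G.Walk u v,
    (∀ x ∈ p.support, x ∈ B) ∧ ∀ e ∈ p.edges, G.neg e = false

/-- `H` is a minor of `G`: after a suitable switching of `G`, there are disjoint
branch sets (each connected via positive edges) for the vertices of `H`, and
distinct edges of `G`, with the correct signs, realizing the edges of `H`. -/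
def IsMinor (H : SGraph W) (G : SGraph V) : Prop :=
  ∃ s : V → Bool, ∃ B : W → Set V,
    (∀ x : W, (G.switch s).PosConnected (B x)) ∧
    (Pairwise fun x y => Disjoint (B x) (B y)) ∧
    ∃ η : H.E → G.E, Function.Injective η ∧
      ∀ (e : H.E) (x y : W), H.ends e = s(x, y) →
        (G.switch s).neg (η e) = H.neg e ∧
        ∃ u v : V, G.ends (η e) = s(u, v) ∧ u ∈ B x ∧ v ∈ B y

/-- A homomorphism of signed graphs: after a suitable switching of the source,
a map of vertices and edges preserving incidences and signs. -/
def HomTo (G : SGraph V) (H : SGraph W) : Prop :=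
  ∃ s : V → Bool, ∃ f : V → W, ∃ g : G.E → H.E,
    ∀ (e : G.E) (u v : V), G.ends e = s(u, v) →
      H.ends (g e) = s(f u, f v) ∧ H.neg (g e) = (G.switch s).neg e

/-- A subdivision of `H` is isomorphic to a subgraph of `G` (signs ignored):
an injection of the vertices of `H` together with internally disjoint,
edge-disjoint paths of `G` realizing the edges of `H`. -/
def IsSubdivisionOf (H : SGraph W) (G : SGraph V) : Prop :=
  ∃ (φ : W → V) (ep : H.E → W × W),
    Function.Injective φ ∧
    (∀ e : H.E, H.ends e = s((ep e).1, (ep e).2)) ∧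
    ∃ P : (e : H.E) → G.Walk (φ (ep e).1) (φ (ep e).2),
      (∀ e, (P e).support.Nodup) ∧
      (∀ e f, e ≠ f → ∀ x ∈ (P e).inner, x ∉ (P f).support) ∧
      (∀ e, ∀ x ∈ (P e).inner, x ∉ Set.range φ) ∧
      (∀ e f, e ≠ f → ∀ g ∈ (P e).edges, g ∉ (P f).edges)

/-- `H` is a total topological minor of `G`: a subdivision of `H` occurs as a
subgraph of `G` in which the path representing each edge `e` of `H` has sign
exactly the sign of `e`. -/
def IsTotalTopMinor (H : SGraph W) (G : SGraph V) : Prop :=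
  ∃ (φ : W → V) (ep : H.E → W × W),
    Function.Injective φ ∧
    (∀ e : H.E, H.ends e = s((ep e).1, (ep e).2)) ∧
    ∃ P : (e : H.E) → G.Walk (φ (ep e).1) (φ (ep e).2),
      (∀ e, (P e).support.Nodup) ∧
      (∀ e f, e ≠ f → ∀ x ∈ (P e).inner, x ∉ (P f).support) ∧
      (∀ e, ∀ x ∈ (P e).inner, x ∉ Set.range φ) ∧
      (∀ e f, e ≠ f → ∀ g ∈ (P e).edges, g ∉ (P f).edges) ∧
      (∀ e, (P e).isNeg = H.neg e)

/-- `H` is a topological minor of `G`: some subdivision of `H` occurs as a subgraph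
of `G` in which every cycle of `H` keeps its sign; equivalently, after a suitable
switching of `H`, `H` is a total topological minor of `G`. -/
def IsTopMinor (H : SGraph W) (G : SGraph V) : Prop :=
  ∃ s : W → Bool, (H.switch s).IsTotalTopMinor G

end SGraph

open SGraph

/-- The signed graph `G̃` obtained from a graph `G` by replacing each edge by a
pair of parallel edges, one positive and one negative. -/
def SimpleGraph.tildeS {V : Type} (G : SimpleGraph V) : SGraph V where
  E := G.edgeSet × Bool
  ends e := (e.1 : Sym2 V)
  neg e := e.2

/-- The all-negative signed graph `(G, -)` on a graph `G`. -/
def SimpleGraph.allNeg {V : Type} (G : SimpleGraph V) : SGraph V where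
  E := G.edgeSet
  ends e := (e : Sym2 V)
  neg _ := true

/-- `K̃_k`: the signed graph on `k` vertices with a positive and a negative edge
between each pair of distinct vertices. -/
def tildeK (k : ℕ) : SGraph (Fin k) := (⊤ : SimpleGraph (Fin k)).tildeS

/-- `(K_k, -)`: the all-negative complete signed graph on `k` vertices. -/
def allNegK (k : ℕ) : SGraph (Fin k) := (⊤ : SimpleGraph (Fin k)).allNeg

/-- `K̃_k⁺`: as `K̃_k`, with in addition a positive loop at every vertex. -/
def tildeKplus (k : ℕ) : SGraph (Fin k) where
  E := ((⊤ : SimpleGraph (Fin k)).edgeSet × Bool) ⊕ Fin k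
  ends := Sum.elim (fun e => (e.1 : Sym2 (Fin k))) (fun i => s(i, i))
  neg := Sum.elim (fun e => e.2) (fun _ => false)

/-- `G` has a `K_k`-minor: `k` disjoint connected branch sets, pairwise joined by an edge. -/
def SimpleGraph.HasCliqueMinor {V : Type} (G : SimpleGraph V) (k : ℕ) : Prop :=
  ∃ T : Fin k → G.Subgraph,
    (∀ i, (T i).coe.Connected) ∧
    (Pairwise fun i j => Disjoint (T i).verts (T j).verts) ∧
    ∀ i j, i ≠ j → ∃ u v, G.Adj u v ∧ u ∈ (T i).verts ∧ v ∈ (T j).verts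

/-- `G` has an odd-`K_k`-minor: a 2-coloring of the vertices together with `k`
disjoint trees, all of whose edges are properly colored, pairwise joined by a
monochromatic edge. -/
def SimpleGraph.HasOddCliqueMinor {V : Type} (G : SimpleGraph V) (k : ℕ) : Prop :=
  ∃ c : V → Bool, ∃ T : Fin k → G.Subgraph,
    (∀ i, (T i).coe.IsTree) ∧
    (Pairwise fun i j => Disjoint (T i).verts (T j).verts) ∧
    (∀ i, ∀ u v, (T i).Adj u v → c u ≠ c v) ∧
    ∀ i j, i ≠ j →
      ∃ u v, G.Adj u v ∧ u ∈ (T i).verts ∧ v ∈ (T j).verts ∧ c u = c v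

/-- `G` has an even-odd-`K_k`-minor: as an odd-`K_k`-minor, with in addition a
properly colored edge between each pair of distinct trees. -/
def SimpleGraph.HasEvenOddCliqueMinor {V : Type} (G : SimpleGraph V) (k : ℕ) : Prop :=
  ∃ c : V → Bool, ∃ T : Fin k → G.Subgraph,
    (∀ i, (T i).coe.IsTree) ∧
    (Pairwise fun i j => Disjoint (T i).verts (T j).verts) ∧
    (∀ i, ∀ u v, (T i).Adj u v → c u ≠ c v) ∧
    ∀ i j, i ≠ j →
      (∃ u v, G.Adj u v ∧ u ∈ (T i).verts ∧ v ∈ (T j).verts ∧ c u = c v) ∧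
      (∃ u v, G.Adj u v ∧ u ∈ (T i).verts ∧ v ∈ (T j).verts ∧ c u ≠ c v)

/-- The fractional chromatic number of a finite graph: the infimum total weight of
a system of nonnegative weights on independent sets covering every vertex with
total weight at least 1. -/
noncomputable def SimpleGraph.fracChrom {V : Type} [Fintype V] [DecidableEq V]
    (G : SimpleGraph V) : ℝ :=
  sInf {r : ℝ | ∃ w : Finset V → ℝ, (∀ A, 0 ≤ w A) ∧
    (∀ A : Finset V, w A ≠ 0 → (∀ u ∈ A, ∀ v ∈ A, ¬G.Adj u v)) ∧
    (∀ v : V, 1 ≤ ∑ A : Finset V, if v ∈ A then w A else 0) ∧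
    ∑ A : Finset V, w A ≤ r}

/-- The fractional balanced chromatic number of a finite signed graph: the infimum
total weight of a system of nonnegative weights on balanced sets covering every
vertex with total weight at least 1. -/
noncomputable def SGraph.fracChromB {V : Type} [Fintype V] [DecidableEq V]
    (G : SGraph V) : ℝ :=
  sInf {r : ℝ | ∃ w : Finset V → ℝ, (∀ A, 0 ≤ w A) ∧
    (∀ A : Finset V, w A ≠ 0 → G.BalancedSet ↑A) ∧
    (∀ v : V, 1 ≤ ∑ A : Finset V, if v ∈ A then w A else 0) ∧
    ∑ A : Finset V, w A ≤ r}

/-- A 0-free `k`-coloring: values from `{±1, …, ±k}` with `ψ u ≠ σ(e)·ψ v` on each edge. -/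
def SGraph.ZeroFreeColorable {V : Type} (G : SGraph V) (k : ℕ) : Prop :=
  ∃ ψ : V → ℤ, (∀ v : V, 1 ≤ |ψ v| ∧ |ψ v| ≤ (k : ℤ)) ∧
    ∀ (e : G.E) (u v : V), G.ends e = s(u, v) →
      ψ u ≠ (if G.neg e then -1 else 1) * ψ v

/-! ### Auxiliary walk API -/

namespace SGraph
namespace Walk

variable {V : Type} {G : SGraph V}

def append : {u v w : V} → G.Walk u v → G.Walk v w → G.Walk u w
  | _, _, _, .nil, q => q
  | _, _, _, .cons e h p, q => .cons e h (p.append q)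

theorem edges_append {u v w : V} (p : G.Walk u v) (q : G.Walk v w) :
    (p.append q).edges = p.edges ++ q.edges := by
  induction p with
  | nil => rfl
  | cons e h p ih => simp [append, edges, ih]

theorem support_eq_cons {u v : V} (p : G.Walk u v) : p.support = u :: p.support.tail := by
  cases p <;> rfl

theorem start_mem_support {u v : V} (p : G.Walk u v) : u ∈ p.support := by
  rw [support_eq_cons]; exact List.mem_cons_self

theorem end_mem_support {u v : V} (p : G.Walk u v) : v ∈ p.support := by
  induction p with
  | nil => exact List.mem_cons_self
  | cons e h p ih => exact List.mem_cons_of_mem _ ih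

theorem support_append {u v w : V} (p : G.Walk u v) (q : G.Walk v w) :
    (p.append q).support = p.support ++ q.support.tail := by
  induction p with
  | nil => simpa [append, support] using support_eq_cons q
  | cons e h p ih => simp [append, support, ih]

theorem isNeg_nil {v : V} : (Walk.nil : G.Walk v v).isNeg = false := rfl

theorem isNeg_cons {u x v : V} (e : G.E) (h : G.ends e = s(u, x)) (p : G.Walk x v) :
    (Walk.cons e h p).isNeg = Bool.xor (G.neg e) p.isNeg := rfl

private theorem foldr_xor (l : List Bool) (b : Bool) :
    l.foldr Bool.xor b = Bool.xor (l.foldr Bool.xor false) b := by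
  induction l with
  | nil => simp
  | cons a l ih => simp [List.foldr_cons, ih, Bool.xor_assoc]

theorem isNeg_append {u v w : V} (p : G.Walk u v) (q : G.Walk v w) :
    (p.append q).isNeg = Bool.xor p.isNeg q.isNeg := by
  unfold isNeg
  rw [edges_append, List.map_append, List.foldr_append, foldr_xor]

def reverse : {u v : V} → G.Walk u v → G.Walk v u
  | _, _, .nil => .nil
  | _, _, .cons e h p => p.reverse.append (.cons e (by rw [h, Sym2.eq_swap]) .nil)

theorem mem_support_reverse {u v x : V} (p : G.Walk u v) :
    x ∈ p.reverse.support ↔ x ∈ p.support := by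
  induction p with
  | nil => simp [reverse]
  | cons e h p ih =>
    rw [reverse, support_append]
    simp [support, ih]
    tauto

theorem isNeg_reverse {u v : V} (p : G.Walk u v) : p.reverse.isNeg = p.isNeg := by
  induction p with
  | nil => simp [reverse]
  | cons e h p ih =>
    rw [reverse, isNeg_append, isNeg_cons, isNeg_cons, isNeg_nil, ih]
    cases G.neg e <;> cases p.isNeg <;> rfl

theorem mem_support_of_edge {u v a b : V} (p : G.Walk u v) (e : G.E)
    (he : e ∈ p.edges) (hab : G.ends e = s(a, b)) :
    a ∈ p.support ∧ b ∈ p.support := by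
  induction p with
  | nil => simp [edges] at he
  | cons e' h' p ih =>
    rw [edges, List.mem_cons] at he
    rcases he with rfl | he
    · rw [h', Sym2.eq_iff] at hab
      rcases hab with ⟨rfl, rfl⟩ | ⟨rfl, rfl⟩
      · exact ⟨start_mem_support _, List.mem_cons_of_mem _ (start_mem_support p)⟩
      · exact ⟨List.mem_cons_of_mem _ (start_mem_support p), start_mem_support _⟩
    · exact ⟨List.mem_cons_of_mem _ ((ih he).1), List.mem_cons_of_mem _ ((ih he).2)⟩

theorem edges_nodup_of_support_nodup {u v : V} (p : G.Walk u v) (h : p.support.Nodup) :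
    p.edges.Nodup := by
  induction p with
  | nil => simp [edges]
  | cons e h' p ih =>
    rw [support, List.nodup_cons] at h
    rw [edges, List.nodup_cons]
    exact ⟨fun he => h.1 (mem_support_of_edge p e he h').1, ih h.2⟩

theorem exists_split_of_mem_edges {u v : V} (p : G.Walk u v) (e : G.E) (he : e ∈ p.edges) :
    ∃ (a b : V) (h2 : G.ends e = s(a, b)) (q : G.Walk u a) (r : G.Walk b v),
      p = q.append (.cons e h2 r) := by
  induction p with
  | nil => simp [edges] at he
  | cons e' h' p ih =>
    rw [edges, List.mem_cons] at he
    by_cases hee : e = e'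
    · subst hee; exact ⟨_, _, h', .nil, p, rfl⟩
    · rcases he with rfl | he
      · exact absurd rfl hee
      · rcases ih he with ⟨a, b, h2, q, r, rfl⟩
        exact ⟨a, b, h2, .cons e' h' q, r, rfl⟩

private theorem foldr_xor_append (l1 l2 : List Bool) :
    (l1 ++ l2).foldr Bool.xor false =
      Bool.xor (l1.foldr Bool.xor false) (l2.foldr Bool.xor false) := by
  rw [List.foldr_append, foldr_xor]

theorem split_at_mem_support [DecidableEq V] {u v w : V} (p : G.Walk u v) (h : w ∈ p.support) :
    ∃ (q : G.Walk u w) (r : G.Walk w v),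
      p.edges = q.edges ++ r.edges ∧ p.support = q.support ++ r.support.tail ∧
      q.support.count w = 1 := by
  induction p with
  | nil =>
    simp only [support, List.mem_singleton] at h
    subst h
    exact ⟨.nil, .nil, by simp [edges], by simp [support], by simp [support]⟩
  | cons e h' p ih =>
    rename_i u x v'
    by_cases hw : w = u
    · subst hw
      exact ⟨.nil, .cons e h' p, by simp [edges], by simp [support], by simp [support]⟩
    · have h2 : w ∈ p.support := by
        rcases List.mem_cons.mp h with h3 | h3
        · exact absurd h3 hw
        · exact h3
      rcases ih h2 with ⟨q, r, hq1, hq2, hq3⟩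
      refine ⟨.cons e h' q, r, by simp [edges, hq1], by simp [support, hq2], ?_⟩
      simp only [support, List.count_cons, hq3]
      simp [Ne.symm hw]

theorem split_at_mem_support_tail [DecidableEq V] {u v w : V} (p : G.Walk u v) (h : w ∈ p.support.tail) :
    ∃ (q : G.Walk u w) (r : G.Walk w v),
      p.edges = q.edges ++ r.edges ∧ q.edges ≠ [] ∧
      p.support = q.support ++ r.support.tail ∧ q.support.tail.count w = 1 := by
  cases p with
  | nil => simp [support] at h
  | cons e h' p =>
    rw [support, List.tail_cons] at h
    rcases split_at_mem_support p h with ⟨q, r, h1, h2, h3⟩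
    exact ⟨.cons e h' q, r, by simp [edges, h1], by simp [edges],
      by simp [support, h2], by simpa [support] using h3⟩

end Walk
end SGraph

/-! ### No negative closed walk inside a balanced set -/

namespace SGraph

variable {V : Type} {G : SGraph V}

/-- A walk `u → u'` with nodup support and `u = u'` has no edges. -/
theorem Walk.edges_eq_nil_of_nodup {u u' : V} (q : G.Walk u u')
    (hnd : q.support.Nodup) (huu : u = u') : q.edges = [] := by
  cases q with
  | nil => rfl
  | cons e h p =>
    subst huu
    rw [Walk.support, List.nodup_cons] at hnd
    exact absurd (Walk.end_mem_support p) hnd.1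

theorem closed_isNeg_false [DecidableEq V] {X : Set V} (hX : G.BalancedSet X) :
    ∀ (n : ℕ) (v : V) (p : G.Walk v v), p.edges.length ≤ n →
      (∀ u ∈ p.support, u ∈ X) → p.isNeg = false := by
  intro n
  induction n with
  | zero =>
    intro v p hp _
    have h0 : p.edges = [] := List.length_eq_zero_iff.mp (Nat.le_zero.mp hp)
    simp [Walk.isNeg, h0]
  | succ n ih =>
    intro v p hlen hsup
    by_cases hnil : p.edges = []
    · simp [Walk.isNeg, hnil]
    by_cases hnd : p.support.tail.Nodup
    · by_cases hed : p.edges.Nodup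
      · exact hX v p ⟨hnil, hed, hnd⟩ hsup
      · -- classification: out-and-back along a repeated edge
        cases p with
        | nil => exact absurd rfl hnil
        | cons e h p' =>
          rename_i x
          rw [Walk.support, List.tail_cons] at hnd
          have hnd' : p'.edges.Nodup := Walk.edges_nodup_of_support_nodup p' hnd
          have hmem : e ∈ p'.edges := by
            rw [Walk.edges, List.nodup_cons] at hed
            by_contra hcon
            exact hed ⟨hcon, hnd'⟩
          rcases Walk.exists_split_of_mem_edges p' e hmem with ⟨a, b, h2, q, r, hpe⟩
          have hsupp' : p'.support = q.support ++ r.support := by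
            rw [hpe, Walk.support_append, Walk.support, List.tail_cons]
          have hcases : (a = v ∧ b = x) ∨ (a = x ∧ b = v) := by
            have : G.ends e = s(v, x) := h
            rw [h2, Sym2.eq_iff] at this
            tauto
          rcases hcases with ⟨rfl, rfl⟩ | ⟨rfl, rfl⟩
          · -- a = v, b = x : contradiction, v appears twice in nodup support
            exfalso
            rw [hsupp'] at hnd
            rcases List.nodup_append'.mp hnd with ⟨-, -, hdisj⟩
            exact hdisj (Walk.end_mem_support q) (Walk.end_mem_support r)
          · -- a = x, b = v : q : x → x, r : v → v both trivial
            rw [hsupp'] at hnd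
            rcases List.nodup_append.mp hnd with ⟨hq, hr, -⟩
            have hqe : q.edges = [] := Walk.edges_eq_nil_of_nodup q hq rfl
            have hre : r.edges = [] := Walk.edges_eq_nil_of_nodup r hr rfl
            have hq0 : q.isNeg = false := by simp [Walk.isNeg, hqe]
            have hr0 : r.isNeg = false := by simp [Walk.isNeg, hre]
            rw [Walk.isNeg_cons, hpe, Walk.isNeg_append, Walk.isNeg_cons, hq0, hr0]
            cases G.neg e <;> rfl
    · -- duplicate vertex surgery
      have hw : ∃ w, 2 ≤ p.support.tail.count w := by
        by_contra hcon
        push_neg at hcon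
        exact hnd (List.nodup_iff_count_le_one.mpr fun a => by have := hcon a; omega)
      rcases hw with ⟨w, hw2⟩
      have hwmem : w ∈ p.support.tail := by
        rw [← List.count_pos_iff]; omega
      rcases Walk.split_at_mem_support_tail p hwmem with ⟨q, r, hpe, hqne, hps, hqc⟩
      have htail : p.support.tail = q.support.tail ++ r.support.tail := by
        have h2 := hps
        rw [Walk.support_eq_cons p, Walk.support_eq_cons q, List.cons_append] at h2
        simpa using h2
      have hwr : w ∈ r.support.tail := by
        rw [← List.count_pos_iff]
        have : p.support.tail.count w = q.support.tail.count w + r.support.tail.count w := by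
          rw [htail, List.count_append]
        omega
      rcases Walk.split_at_mem_support_tail r hwr with ⟨q2, r2, hre, hq2ne, hrs, -⟩
      -- first closed walk: q2 : w → w ; second : q.append r2 : v → v
      have hrX : ∀ u ∈ r.support, u ∈ X := by
        intro u hu
        rw [Walk.support_eq_cons r] at hu
        rcases List.mem_cons.mp hu with rfl | hu
        · exact hsup u (by rw [Walk.support_eq_cons p]; exact List.mem_cons_of_mem _ hwmem)
        · exact hsup u (by rw [hps]; exact List.mem_append_right _ hu)
      have hlen1 : q2.edges.length ≤ n := by
        have h1 : p.edges.length = q.edges.length + r.edges.length := by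
          rw [hpe, List.length_append]
        have h2 : r.edges.length = q2.edges.length + r2.edges.length := by
          rw [hre, List.length_append]
        have h3 : q.edges.length ≠ 0 := fun hh => hqne (List.length_eq_zero_iff.mp hh)
        omega
      have hC1 : q2.isNeg = false := by
        refine ih w q2 hlen1 ?_
        intro u hu
        exact hrX u (by rw [hrs]; exact List.mem_append_left _ hu)
      have hlen2 : (q.append r2).edges.length ≤ n := by
        rw [Walk.edges_append, List.length_append]
        have h1 : p.edges.length = q.edges.length + r.edges.length := by
          rw [hpe, List.length_append]
        have h2 : r.edges.length = q2.edges.length + r2.edges.length := by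
          rw [hre, List.length_append]
        have h3 : q2.edges.length ≠ 0 := fun hh => hq2ne (List.length_eq_zero_iff.mp hh)
        omega
      have hC2 : (q.append r2).isNeg = false := by
        refine ih v (q.append r2) hlen2 ?_
        intro u hu
        rw [Walk.support_append, List.mem_append] at hu
        rcases hu with hu | hu
        · exact hsup u (by rw [hps]; exact List.mem_append_left _ hu)
        · exact hrX u (by rw [hrs]; exact List.mem_append_right _ hu)
      -- combine signs
      have e1 : p.isNeg = Bool.xor q.isNeg r.isNeg := by
        unfold Walk.isNeg
        rw [hpe, List.map_append, SGraph.Walk.foldr_xor_append]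
      have e2 : r.isNeg = Bool.xor q2.isNeg r2.isNeg := by
        unfold Walk.isNeg
        rw [hre, List.map_append, SGraph.Walk.foldr_xor_append]
      have e3 : (q.append r2).isNeg = Bool.xor q.isNeg r2.isNeg := Walk.isNeg_append q r2
      rw [e2] at e1
      have : Bool.xor q2.isNeg (q.append r2).isNeg = false := by rw [hC1, hC2]; rfl
      rw [e3] at this
      rw [e1]
      revert this
      cases hb1 : q.isNeg <;> cases hb2 : q2.isNeg <;> cases hb3 : r2.isNeg <;> decide

/-- Two walks between the same endpoints inside a balanced set have the same sign. -/
theorem sign_unique {X : Set V} (hX : G.BalancedSet X) {u v : V}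
    (p q : G.Walk u v) (hp : ∀ x ∈ p.support, x ∈ X) (hq : ∀ x ∈ q.support, x ∈ X) :
    p.isNeg = q.isNeg := by
  classical
  have hsup : ∀ x ∈ (p.append q.reverse).support, x ∈ X := by
    intro x hx
    rw [Walk.support_append, List.mem_append] at hx
    rcases hx with hx | hx
    · exact hp x hx
    · exact hq x ((Walk.mem_support_reverse q).mp (List.mem_of_mem_tail hx))
  have h0 := closed_isNeg_false hX (p.append q.reverse).edges.length u
    (p.append q.reverse) le_rfl hsup
  rw [Walk.isNeg_append, Walk.isNeg_reverse] at h0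
  cases hp1 : p.isNeg <;> cases hq1 : q.isNeg <;> simp [hp1, hq1] at h0 <;> rfl

/-- Version of `sign_unique` allowing different (but equal) start vertices. -/
theorem sign_unique' {X : Set V} (hX : G.BalancedSet X) {u u' v : V} (huu : u = u')
    (p : G.Walk u v) (q : G.Walk u' v)
    (hp : ∀ x ∈ p.support, x ∈ X) (hq : ∀ x ∈ q.support, x ∈ X) :
    p.isNeg = q.isNeg := by
  subst huu
  exact sign_unique hX p q hp hq

/-! ### Component representatives for a coloring -/

def walkRel {k : ℕ} (G : SGraph V) (c : V → Fin k) (u v : V) : Prop :=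
  c u = c v ∧ ∃ p : G.Walk u v, ∀ x ∈ p.support, c x = c u

theorem walkRel_equivalence {k : ℕ} (c : V → Fin k) : Equivalence (walkRel G c) := by
  constructor
  · intro v
    refine ⟨rfl, .nil, ?_⟩
    intro x hx
    simp only [Walk.support, List.mem_singleton] at hx
    subst hx; rfl
  · rintro u v ⟨h1, p, hp⟩
    refine ⟨h1.symm, p.reverse, ?_⟩
    intro x hx
    rw [← h1]
    exact hp x ((Walk.mem_support_reverse p).mp hx)
  · rintro u v w ⟨h1, p, hp⟩ ⟨h2, q, hq⟩
    refine ⟨h1.trans h2, p.append q, ?_⟩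
    intro x hx
    rw [Walk.support_append, List.mem_append] at hx
    rcases hx with hx | hx
    · exact hp x hx
    · rw [h1]; exact hq x (List.mem_of_mem_tail hx)

def compSetoid {k : ℕ} (G : SGraph V) (c : V → Fin k) : Setoid V :=
  ⟨walkRel G c, walkRel_equivalence c⟩

noncomputable def rep {k : ℕ} (G : SGraph V) (c : V → Fin k) (v : V) : V :=
  (Quotient.mk (compSetoid G c) v).out

theorem rep_rel {k : ℕ} (c : V → Fin k) (v : V) : walkRel G c (G.rep c v) v :=
  Quotient.exact (s := compSetoid G c) (Quotient.out_eq _)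

theorem rep_eq_of_rel {k : ℕ} (c : V → Fin k) {u v : V} (h : walkRel G c u v) :
    G.rep c u = G.rep c v :=
  congrArg Quotient.out (Quotient.sound (s := compSetoid G c) h)

end SGraph

/-! ### Walk lemma for 0-free colorings -/

theorem SGraph.Walk.psi_spec {V : Type} {G : SGraph V} (ψ : V → ℤ)
    (hstep : ∀ (e : G.E) (a b : V), G.ends e = s(a, b) → |ψ a| = |ψ b| →
      ψ a = (if G.neg e then -1 else 1) * ψ b) :
    ∀ {u v : V} (p : G.Walk u v), (∀ x ∈ p.support, |ψ x| = |ψ u|) →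
      ψ u = (if p.isNeg then -1 else 1) * ψ v := by
  intro u v p
  induction p with
  | nil => intro _; simp [Walk.isNeg_nil]
  | cons e h p ih =>
    rename_i u' x w
    intro habs
    have hx : |ψ x| = |ψ u'| :=
      habs x (List.mem_cons_of_mem _ (Walk.start_mem_support p))
    have h1 : ψ u' = (if G.neg e then -1 else 1) * ψ x := hstep e u' x h hx.symm
    have h2 : ψ x = (if p.isNeg then -1 else 1) * ψ w := by
      refine ih ?_
      intro y hy
      rw [hx]
      exact habs y (List.mem_cons_of_mem _ hy)
    rw [Walk.isNeg_cons, h1, h2]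
    cases G.neg e <;> cases p.isNeg <;> simp <;> ring

private theorem abs_pm_mul (b : Bool) (x : ℤ) :
    |(if b then (-1:ℤ) else 1) * x| = |x| := by
  cases b <;> simp

/-- `(G, σ)` with no positive loop admits a balanced `k`-coloring iff
`(G, -σ)` admits a 0-free `k`-coloring. -/
theorem stmt4 {V : Type} (G : SGraph V) (k : ℕ) (hpl : ¬ G.HasPosLoop) :
    G.ColorableB k ↔ G.negate.ZeroFreeColorable k := by
  classical
  constructor
  · rintro ⟨c, hc⟩
    have key : ∀ v : V, ∃ p : G.Walk (G.rep c v) v, ∀ x ∈ p.support, c x = c v := by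
      intro v
      obtain ⟨h1, p, hp⟩ := SGraph.rep_rel (G := G) c v
      exact ⟨p, fun x hx => (hp x hx).trans h1⟩
    choose pick hpick using key
    refine ⟨fun v => (if (pick v).isNeg then (-1:ℤ) else 1) * (((c v : ℕ) : ℤ) + 1), ?_, ?_⟩
    · intro v
      have hm : (0:ℤ) ≤ ((c v : ℕ) : ℤ) + 1 := by positivity
      rw [abs_pm_mul, abs_of_nonneg hm]
      have := (c v).isLt
      constructor <;> omega
    · intro e u v hev
      beta_reduce
      have hev' : G.ends e = s(u, v) := hev
      have hneg : G.negate.neg e = !G.neg e := rfl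
      rw [hneg]
      by_cases hcc : c u = c v
      · have hrel : SGraph.walkRel G c u v := by
          refine ⟨hcc, .cons e hev' .nil, ?_⟩
          intro x hx
          simp only [SGraph.Walk.support, List.mem_cons, List.mem_singleton,
            List.not_mem_nil, or_false] at hx
          rcases hx with rfl | rfl
          · rfl
          · exact hcc.symm
        have hrw : G.rep c v = G.rep c u := (SGraph.rep_eq_of_rel c hrel).symm
        have hkey : (pick v).isNeg = Bool.xor (pick u).isNeg (G.neg e) := by
          have hq : ((pick u).append (.cons e hev' .nil)).isNeg
              = Bool.xor (pick u).isNeg (G.neg e) := by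
            rw [SGraph.Walk.isNeg_append]
            change Bool.xor (pick u).isNeg (Bool.xor (G.neg e) false) = Bool.xor (pick u).isNeg (G.neg e)
            cases G.neg e <;> cases (pick u).isNeg <;> rfl
          rw [← hq]
          refine SGraph.sign_unique' (X := {x | c x = c v}) (hc (c v)) hrw (pick v)
            ((pick u).append (.cons e hev' .nil)) ?_ ?_
          · intro x hx
            exact hpick v x hx
          · intro x hx
            rw [SGraph.Walk.support_append, List.mem_append] at hx
            rcases hx with hx | hx
            · exact (hpick u x hx).trans hcc
            · simp only [SGraph.Walk.support, List.tail_cons, List.mem_singleton] at hx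
              subst hx
              rfl
        have hm : (0:ℤ) < ((c v : ℕ) : ℤ) + 1 := by positivity
        rw [hcc, hkey]
        cases hb1 : (pick u).isNeg <;> cases hb2 : G.neg e <;> simp <;> omega
      · intro hEq
        apply hcc
        have h1 := congrArg abs hEq
        rw [abs_pm_mul, abs_pm_mul, abs_pm_mul] at h1
        rw [abs_of_nonneg (by positivity : (0:ℤ) ≤ ((c u : ℕ) : ℤ) + 1),
          abs_of_nonneg (by positivity : (0:ℤ) ≤ ((c v : ℕ) : ℤ) + 1)] at h1
        exact Fin.ext (by omega)
  · rintro ⟨ψ, hb, he⟩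
    have hstep : ∀ (e : G.E) (a b : V), G.ends e = s(a, b) → |ψ a| = |ψ b| →
        ψ a = (if G.neg e then -1 else 1) * ψ b := by
      intro e a b hab habs
      have h2 : ψ a ≠ (if G.negate.neg e then (-1:ℤ) else 1) * ψ b := he e a b hab
      have hnegne : G.negate.neg e = !G.neg e := rfl
      rw [hnegne] at h2
      rcases abs_eq_abs.mp habs with h3 | h3
      · cases hgn : G.neg e
        · simpa using h3
        · rw [hgn] at h2
          simp at h2
          exact absurd h3 h2
      · cases hgn : G.neg e
        · rw [hgn] at h2
          simp at h2
          exact absurd h3 h2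
        · simpa using h3
    obtain ⟨c, hcdef⟩ : ∃ c : V → Fin k, ∀ v, (c v : ℕ) = (|ψ v| - 1).toNat :=
      ⟨fun v => ⟨(|ψ v| - 1).toNat, by have := hb v; omega⟩, fun v => rfl⟩
    refine ⟨c, ?_⟩
    intro i v p hcyc hsup
    have hsup' : ∀ x ∈ p.support, c x = i := hsup
    have habs : ∀ x ∈ p.support, |ψ x| = |ψ v| := by
      intro x hx
      have h4 := congrArg Fin.val
        ((hsup' x hx).trans (hsup' v (SGraph.Walk.start_mem_support p)).symm)
      rw [hcdef, hcdef] at h4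
      have := hb x
      have := hb v
      omega
    have hps := SGraph.Walk.psi_spec ψ hstep p habs
    cases hneg : p.isNeg
    · rfl
    · rw [hneg] at hps
      simp at hps
      have h0 : ψ v = 0 := by omega
      have := hb v
      rw [h0] at this
      simp at this
end

section
/- For every signed graph Ĝ with no negative loop, there exists a signed graph H̃ with no negative loop (but possibly positive loops), in which every pair of distinct adjacent vertices is joined by both a positive and a negative edge (a digon), such that H̃ is simultaneously a minor of Ĝ and a homomorphic image of Ĝ. -/
open SGraph

section Stmt8Aux
namespace SGraph
variable {V : Type}
variable {G : SGraph V}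

lemma switch_neg_eq {s : V → Bool} {e : G.E} {u v : V} (h : G.ends e = s(u, v)) :
    (G.switch s).neg e = Bool.xor (G.neg e) (Bool.xor (s u) (s v)) := by
  simp [switch, h]

lemma Walk.start_mem_support_s8 : ∀ {u v : V} (p : G.Walk u v), u ∈ p.support
  | _, _, .nil => List.mem_singleton_self _
  | _, _, .cons _ _ _ => List.mem_cons_self

def Walk.append_s8 : {u v w : V} → G.Walk u v → G.Walk v w → G.Walk u w
  | _, _, _, .nil, q => q
  | _, _, _, .cons e h p, q => .cons e h (p.append_s8 q)

lemma Walk.mem_support_append : ∀ {u v w : V} (p : G.Walk u v) (q : G.Walk v w)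
    (x : V), x ∈ (p.append_s8 q).support → x ∈ p.support ∨ x ∈ q.support
  | _, _, _, .nil, q, x, hx => Or.inr hx
  | _, _, _, .cons e h p, q, x, hx => by
    rw [Walk.append_s8, Walk.support] at hx
    rcases List.mem_cons.1 hx with h1 | h1
    · exact Or.inl (h1 ▸ List.mem_cons_self)
    · rcases Walk.mem_support_append p q x h1 with h2 | h2
      · exact Or.inl (List.mem_cons_of_mem _ h2)
      · exact Or.inr h2

lemma Walk.mem_edges_endpoints : ∀ {u v : V} (p : G.Walk u v) (e : G.E),
    e ∈ p.edges → ∃ a b, G.ends e = s(a, b) ∧ a ∈ p.support ∧ b ∈ p.support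
  | _, _, .nil, e, he => absurd he (by simp [Walk.edges])
  | u, w, .cons (v := v) e' h p, e, he => by
    rw [Walk.edges] at he
    rcases List.mem_cons.1 he with rfl | h1
    · exact ⟨u, v, h, List.mem_cons_self, List.mem_cons_of_mem _ p.start_mem_support_s8⟩
    · obtain ⟨a, b, hab, ha, hb⟩ := Walk.mem_edges_endpoints p e h1
      exact ⟨a, b, hab, List.mem_cons_of_mem _ ha, List.mem_cons_of_mem _ hb⟩

def GoodPair (G : SGraph V) (p : (V → Bool) × Setoid V) : Prop :=
  (∀ (e : G.E) (u v : V), G.ends e = s(u, v) → p.2.r u v → (G.switch p.1).neg e = false) ∧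
  (∀ u v : V, p.2.r u v → ∃ w : G.Walk u v, ∀ x ∈ w.support, p.2.r u x)

def PairLE (p q : (V → Bool) × Setoid V) : Prop :=
  (∀ u v, p.2.r u v → q.2.r u v) ∧
  (∀ u v, p.2.r u v → Bool.xor (p.1 u) (p.1 v) = Bool.xor (q.1 u) (q.1 v))

lemma PairLE.refl (p : (V → Bool) × Setoid V) : PairLE p p :=
  ⟨fun _ _ h => h, fun _ _ _ => rfl⟩

lemma PairLE.trans {p q r : (V → Bool) × Setoid V} (h1 : PairLE p q) (h2 : PairLE q r) :
    PairLE p r :=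
  ⟨fun u v h => h2.1 u v (h1.1 u v h), fun u v h => (h1.2 u v h).trans (h2.2 u v (h1.1 u v h))⟩


lemma exists_ub (c : Set {p : (V → Bool) × Setoid V // GoodPair G p})
    (hc : IsChain (fun p q => PairLE p.val q.val) c) (hne : c.Nonempty) :
    ∃ ub : {p : (V → Bool) × Setoid V // GoodPair G p}, ∀ a ∈ c, PairLE a.val ub.val := by
  classical
  obtain ⟨p₀, hp₀⟩ := hne
  have dir : ∀ p ∈ c, ∀ q ∈ c, ∃ m, m ∈ c ∧ PairLE p.val m.val ∧ PairLE q.val m.val := by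
    intro p hp q hq
    rcases eq_or_ne p q with rfl | hpq
    · exact ⟨p, hp, PairLE.refl _, PairLE.refl _⟩
    · rcases hc hp hq hpq with h | h
      · exact ⟨q, hq, h, PairLE.refl _⟩
      · exact ⟨p, hp, PairLE.refl _, h⟩
  have equiv : Equivalence (fun u v : V => ∃ p, p ∈ c ∧ p.val.2.r u v) := by
    constructor
    · exact fun v => ⟨p₀, hp₀, p₀.val.2.iseqv.refl v⟩
    · rintro u v ⟨p, hp, h⟩; exact ⟨p, hp, p.val.2.iseqv.symm h⟩
    · rintro u v w ⟨p, hp, h1⟩ ⟨q, hq, h2⟩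
      obtain ⟨m, hm, hpm, hqm⟩ := dir p hp q hq
      exact ⟨m, hm, m.val.2.iseqv.trans (hpm.1 _ _ h1) (hqm.1 _ _ h2)⟩
  set Sinf : Setoid V := ⟨fun u v => ∃ p, p ∈ c ∧ p.val.2.r u v, equiv⟩ with hSinf
  set rep : V → V := fun v => (Quotient.mk Sinf v).out with hrepdef
  have hrep : ∀ v, ∃ p, p ∈ c ∧ p.val.2.r v (rep v) := by
    intro v
    have h1 : Quotient.mk Sinf (rep v) = Quotient.mk Sinf v := Quotient.out_eq _
    have h2 : Sinf.r (rep v) v := Quotient.exact h1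
    obtain ⟨p, hp, hr⟩ := h2
    exact ⟨p, hp, p.val.2.iseqv.symm hr⟩
  have hrepeq : ∀ u v : V, (∃ p, p ∈ c ∧ p.val.2.r u v) → rep u = rep v := by
    intro u v h
    show (Quotient.mk Sinf u).out = (Quotient.mk Sinf v).out
    congr 1
    exact Quotient.sound h
  set sinf : V → Bool :=
    fun v => Bool.xor ((hrep v).choose.val.1 v) ((hrep v).choose.val.1 (rep v)) with hsinfdef
  have key : ∀ p ∈ c, ∀ u v : V, p.val.2.r u v →
      Bool.xor (sinf u) (sinf v) = Bool.xor (p.val.1 u) (p.val.1 v) := by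
    intro p hp u v huv
    have hre : rep u = rep v := hrepeq u v ⟨p, hp, huv⟩
    obtain ⟨hp1c, hp1r⟩ := (hrep u).choose_spec
    obtain ⟨hp2c, hp2r⟩ := (hrep v).choose_spec
    set p1 := (hrep u).choose
    set p2 := (hrep v).choose
    obtain ⟨m1, hm1, h1, h2⟩ := dir p1 hp1c p2 hp2c
    obtain ⟨m, hm, h3, h4⟩ := dir m1 hm1 p hp
    have e1 : Bool.xor (p1.val.1 u) (p1.val.1 (rep u))
        = Bool.xor (m.val.1 u) (m.val.1 (rep u)) :=
      ((h1.trans h3).2 u (rep u) hp1r)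
    have e2 : Bool.xor (p2.val.1 v) (p2.val.1 (rep u))
        = Bool.xor (m.val.1 v) (m.val.1 (rep u)) := by
      rw [hre]; exact ((h2.trans h3).2 v (rep v) hp2r)
    have e3 : Bool.xor (p.val.1 u) (p.val.1 v) = Bool.xor (m.val.1 u) (m.val.1 v) :=
      (h4.2 u v huv)
    have hsu : sinf u = Bool.xor (p1.val.1 u) (p1.val.1 (rep u)) := rfl
    have hsv : sinf v = Bool.xor (p2.val.1 v) (p2.val.1 (rep u)) := by rw [hsinfdef, hre]
    rw [hsu, hsv, e1, e2, e3]
    generalize m.val.1 u = a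
    generalize m.val.1 v = b
    generalize m.val.1 (rep u) = r
    cases a <;> cases b <;> cases r <;> rfl
  have good : GoodPair G (sinf, Sinf) := by
    constructor
    · rintro e u v hends ⟨p, hp, hpr⟩
      have h1 := p.prop.1 e u v hends hpr
      rw [switch_neg_eq hends] at h1 ⊢
      rw [key p hp u v hpr]
      exact h1
    · rintro u v ⟨p, hp, hpr⟩
      obtain ⟨w, hw⟩ := p.prop.2 u v hpr
      exact ⟨w, fun x hx => ⟨p, hp, hw x hx⟩⟩
  exact ⟨⟨(sinf, Sinf), good⟩, fun a ha =>
    ⟨fun u v h => ⟨a, ha, h⟩, fun u v h => (key a ha u v h).symm⟩⟩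


lemma digon_step (m : {p : (V → Bool) × Setoid V // GoodPair G p})
    (hmax : ∀ a : {p : (V → Bool) × Setoid V // GoodPair G p},
      PairLE m.val a.val → PairLE a.val m.val)
    {x y : V} (hxy : ¬ m.val.2.r x y)
    (hcross : ∃ (e : G.E) (u v : V), G.ends e = s(u, v) ∧ m.val.2.r u x ∧ m.val.2.r v y)
    (b : Bool) :
    ∃ (e : G.E) (u v : V), G.ends e = s(u, v) ∧ m.val.2.r u x ∧ m.val.2.r v y ∧
      (G.switch m.val.1).neg e = b := by
  classical
  by_contra hno
  push_neg at hno
  set s := m.val.1 with hs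
  set R := m.val.2.r with hR
  have rfl' : ∀ a, R a a := m.val.2.iseqv.refl
  have sy : ∀ {a b : V}, R a b → R b a := fun h => m.val.2.iseqv.symm h
  have tr : ∀ {a b c : V}, R a b → R b c → R a c := fun h1 h2 => m.val.2.iseqv.trans h1 h2
  have hall : ∀ (e : G.E) (u v : V), G.ends e = s(u, v) → R u x → R v y →
      (G.switch s).neg e = !b := by
    intro e u v he hu hv
    have := hno e u v he hu hv
    cases hb : (G.switch s).neg e <;> cases b <;> simp_all
  -- merged relation
  set R' : V → V → Prop := fun u v => R u v ∨ (R u x ∧ R y v) ∨ (R u y ∧ R x v) with hR'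
  have equiv' : Equivalence R' := by
    constructor
    · exact fun a => Or.inl (rfl' a)
    · rintro a b (h | ⟨h1, h2⟩ | ⟨h1, h2⟩)
      · exact Or.inl (sy h)
      · exact Or.inr (Or.inr ⟨sy h2, sy h1⟩)
      · exact Or.inr (Or.inl ⟨sy h2, sy h1⟩)
    · rintro a b c (h | ⟨h1, h2⟩ | ⟨h1, h2⟩) (g | ⟨g1, g2⟩ | ⟨g1, g2⟩)
      · exact Or.inl (tr h g)
      · exact Or.inr (Or.inl ⟨tr h g1, g2⟩)
      · exact Or.inr (Or.inr ⟨tr h g1, g2⟩)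
      · exact Or.inr (Or.inl ⟨h1, tr h2 g⟩)
      · exact absurd (sy (tr h2 g1)) hxy
      · exact Or.inl (tr h1 g2)
      · exact Or.inr (Or.inr ⟨h1, tr h2 g⟩)
      · exact Or.inl (tr h1 g2)
      · exact absurd (tr h2 g1) hxy
  set σ : Bool := !b with hσ
  set s' : V → Bool := fun v => if R v y then Bool.xor (s v) σ else s v with hs'
  have hs'y : ∀ {v}, R v y → s' v = Bool.xor (s v) σ := fun h => if_pos h
  have hs'n : ∀ {v}, ¬ R v y → s' v = s v := fun h => if_neg h
  have hxor : ∀ u v : V, R u v → Bool.xor (s u) (s v) = Bool.xor (s' u) (s' v) := by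
    intro u v h
    by_cases hv : R v y
    · rw [hs'y (tr h hv), hs'y hv]
      generalize s u = a; generalize s v = b'; cases a <;> cases b' <;> cases σ <;> rfl
    · rw [hs'n (fun hh => hv (tr (sy h) hh)), hs'n hv]
  have good' : GoodPair G (s', ⟨R', equiv'⟩) := by
    constructor
    · rintro e u v hends (h | ⟨h1, h2⟩ | ⟨h1, h2⟩)
      · rw [switch_neg_eq hends, ← hxor u v h, ← switch_neg_eq hends]
        exact m.prop.1 e u v hends h
      · have hvy : R v y := sy h2
        have huy : ¬ R u y := fun hh => hxy (tr (sy h1) hh)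
        have := hall e u v hends h1 hvy
        rw [switch_neg_eq hends] at this ⊢
        show Bool.xor (G.neg e) (Bool.xor (s' u) (s' v)) = false
        rw [hs'y hvy, hs'n huy]
        rw [hσ] at this ⊢
        revert this
        generalize G.neg e = a; generalize s u = p'; generalize s v = q'
        cases a <;> cases p' <;> cases q' <;> cases b <;> simp
      · have huy : R u y := h1
        have hvy : ¬ R v y := fun hh => hxy (tr h2 hh)
        have hends' : G.ends e = s(v, u) := by rw [hends, Sym2.eq_swap]
        have := hall e v u hends' (sy h2) huy
        rw [switch_neg_eq hends'] at this
        rw [switch_neg_eq hends]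
        show Bool.xor (G.neg e) (Bool.xor (s' u) (s' v)) = false
        rw [hs'y huy, hs'n hvy]
        rw [hσ] at this ⊢
        revert this
        generalize G.neg e = a; generalize s u = p'; generalize s v = q'
        cases a <;> cases p' <;> cases q' <;> cases b <;> simp
    · rintro u v (h | ⟨h1, h2⟩ | ⟨h1, h2⟩)
      · obtain ⟨w, hw⟩ := m.prop.2 u v h
        exact ⟨w, fun z hz => Or.inl (hw z hz)⟩
      · obtain ⟨e0, u0, v0, h0, hu0, hv0⟩ := hcross
        obtain ⟨w1, hw1⟩ := m.prop.2 u u0 (tr h1 (sy hu0))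
        obtain ⟨w2, hw2⟩ := m.prop.2 v0 v (tr hv0 h2)
        refine ⟨w1.append_s8 (Walk.cons e0 h0 w2), fun z hz => ?_⟩
        rcases Walk.mem_support_append w1 (Walk.cons e0 h0 w2) z hz with h' | h'
        · exact Or.inl (hw1 z h')
        · rw [Walk.support] at h'
          rcases List.mem_cons.1 h' with rfl | h''
          · exact Or.inl (tr h1 (sy hu0))
          · exact Or.inr (Or.inl ⟨h1, tr (sy hv0) (hw2 z h'')⟩)
      · obtain ⟨e0, u0, v0, h0, hu0, hv0⟩ := hcross
        have h0' : G.ends e0 = s(v0, u0) := by rw [h0, Sym2.eq_swap]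
        obtain ⟨w1, hw1⟩ := m.prop.2 u v0 (tr h1 (sy hv0))
        obtain ⟨w2, hw2⟩ := m.prop.2 u0 v (tr hu0 h2)
        refine ⟨w1.append_s8 (Walk.cons e0 h0' w2), fun z hz => ?_⟩
        rcases Walk.mem_support_append w1 (Walk.cons e0 h0' w2) z hz with h' | h'
        · exact Or.inl (hw1 z h')
        · rw [Walk.support] at h'
          rcases List.mem_cons.1 h' with rfl | h''
          · exact Or.inl (tr h1 (sy hv0))
          · exact Or.inr (Or.inr ⟨h1, tr (sy hu0) (hw2 z h'')⟩)
  have hle : PairLE m.val (s', ⟨R', equiv'⟩) := ⟨fun u v h => Or.inl h, hxor⟩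
  have := (hmax ⟨(s', ⟨R', equiv'⟩), good'⟩ hle).1 x y (Or.inr (Or.inl ⟨rfl' x, rfl' y⟩))
  exact hxy this


def Walk.toSwitch {s : V → Bool} : {u v : V} → G.Walk u v → (G.switch s).Walk u v
  | _, _, .nil => .nil
  | _, _, .cons e h p => .cons e h p.toSwitch

lemma Walk.toSwitch_support {s : V → Bool} :
    ∀ {u v : V} (p : G.Walk u v), (Walk.toSwitch (s := s) p).support = p.support
  | _, _, .nil => rfl
  | _, _, .cons e h p => by
    simp only [Walk.toSwitch, Walk.support, Walk.toSwitch_support p]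

lemma Walk.toSwitch_edges {s : V → Bool} :
    ∀ {u v : V} (p : G.Walk u v), (Walk.toSwitch (s := s) p).edges = p.edges
  | _, _, .nil => rfl
  | _, _, .cons e h p => by
    simp only [Walk.toSwitch, Walk.edges, Walk.toSwitch_edges p]
    rfl

end SGraph
end Stmt8Aux

/-- every signed graph `G` with no negative loop has a signed graph `H`
with no negative loop, in which every pair of distinct adjacent vertices is joined
by a digon, that is both a minor and a homomorphic image of `G`. -/
theorem stmt8 {V : Type} (G : SGraph V) (h : ¬ G.HasNegLoop) :
    ∃ (W : Type) (H : SGraph W),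
      ¬ H.HasNegLoop ∧
      (∀ u v : W, u ≠ v → (∃ e : H.E, H.ends e = s(u, v)) →
        (∃ e : H.E, H.ends e = s(u, v) ∧ H.neg e = false) ∧
        (∃ e : H.E, H.ends e = s(u, v) ∧ H.neg e = true)) ∧
      H.IsMinor G ∧ G.HomTo H := by
  classical
  haveI : Nonempty {p : (V → Bool) × Setoid V // SGraph.GoodPair G p} := by
    refine ⟨⟨(fun _ => false, ⟨Eq, eq_equivalence⟩), ?_, ?_⟩⟩
    · intro e u v hends huv
      have huv' : u = v := huv
      subst huv'
      rw [SGraph.switch_neg_eq hends]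
      have hne : G.neg e = false := by
        by_contra hne
        exact h ⟨e, ⟨u, hends⟩, by simpa using hne⟩
      simp [hne]
    · intro u v huv
      have huv' : u = v := huv
      subst huv'
      refine ⟨.nil, ?_⟩
      intro x hx
      have : x = u := by simpa [SGraph.Walk.support] using hx
      exact this.symm
  obtain ⟨m, hmax⟩ := exists_maximal_of_nonempty_chains_bounded
    (r := fun p q : {p : (V → Bool) × Setoid V // SGraph.GoodPair G p} =>
      SGraph.PairLE p.val q.val)
    (fun c hc hne => SGraph.exists_ub c hc hne)
    (fun h1 h2 => SGraph.PairLE.trans h1 h2)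
  set f : V → Quotient m.val.2 := Quotient.mk m.val.2 with hf
  have fsound : ∀ {a b : V}, m.val.2.r a b → f a = f b := fun h' => Quotient.sound h'
  have fexact : ∀ {a b : V}, f a = f b → m.val.2.r a b := fun h' => Quotient.exact h'
  have sym2ex : ∀ (z : Sym2 V), ∃ a b, z = s(a, b) := fun z =>
    Sym2.ind (fun a b => ⟨a, b, rfl⟩) z
  refine ⟨Quotient m.val.2,
    ⟨{p : Sym2 (Quotient m.val.2) × Bool // ∃ e : G.E,
        Sym2.map f (G.ends e) = p.1 ∧ (G.switch m.val.1).neg e = p.2},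
      fun p => p.val.1, fun p => p.val.2⟩, ?_, ?_, ?_, ?_⟩
  · rintro ⟨⟨⟨z, bb⟩, e0, hmap, hsign⟩, ⟨x, hx⟩, hneg⟩
    obtain ⟨a, b, hab⟩ := sym2ex (G.ends e0)
    rw [hab, Sym2.map_pair_eq] at hmap
    have hx' : z = s(x, x) := hx
    rw [hx'] at hmap
    have hneg' : bb = true := hneg
    rcases Sym2.eq_iff.1 hmap with ⟨h1, h2⟩ | ⟨h1, h2⟩ <;>
    · have hr : m.val.2.r a b := fexact (h1.trans h2.symm)
      have := m.prop.1 e0 a b hab hr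
      rw [hsign, hneg'] at this
      simp at this
  · intro u v huv hadj
    have key : ∀ (x y : V), f x = u → f y = v →
        (∃ (e : G.E) (u' v' : V), G.ends e = s(u', v') ∧ m.val.2.r u' x ∧ m.val.2.r v' y) →
        ∀ bb : Bool, ∃ ee : {p : Sym2 (Quotient m.val.2) × Bool // ∃ e : G.E,
          Sym2.map f (G.ends e) = p.1 ∧ (G.switch m.val.1).neg e = p.2},
          ee.val.1 = s(u, v) ∧ ee.val.2 = bb := by
      intro x y hfx hfy hcross bb
      have hxy : ¬ m.val.2.r x y := fun hr => huv (by rw [← hfx, ← hfy]; exact fsound hr)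
      obtain ⟨e1, p, q, he1, hp, hq, hsg⟩ := SGraph.digon_step m hmax hxy hcross bb
      refine ⟨⟨(s(u, v), bb), e1, ?_, hsg⟩, rfl, rfl⟩
      rw [he1, Sym2.map_pair_eq, fsound hp, fsound hq, hfx, hfy]
    obtain ⟨⟨⟨z, bb⟩, e0, hmap, hsign⟩, he⟩ := hadj
    have he' : z = s(u, v) := he
    obtain ⟨a, b, hab⟩ := sym2ex (G.ends e0)
    rw [hab, Sym2.map_pair_eq, he'] at hmap
    rcases Sym2.eq_iff.1 hmap with ⟨h1, h2⟩ | ⟨h1, h2⟩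
    · have hcross : ∃ (e : G.E) (u' v' : V), G.ends e = s(u', v') ∧
          m.val.2.r u' a ∧ m.val.2.r v' b :=
        ⟨e0, a, b, hab, m.val.2.iseqv.refl a, m.val.2.iseqv.refl b⟩
      exact ⟨key a b h1 h2 hcross false, key a b h1 h2 hcross true⟩
    · have hcross : ∃ (e : G.E) (u' v' : V), G.ends e = s(u', v') ∧
          m.val.2.r u' b ∧ m.val.2.r v' a :=
        ⟨e0, b, a, by rw [hab, Sym2.eq_swap], m.val.2.iseqv.refl b, m.val.2.iseqv.refl a⟩
      exact ⟨key b a h2 h1 hcross false, key b a h2 h1 hcross true⟩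
  · refine ⟨m.val.1, fun x => {v | f v = x}, ?_, ?_, ?_⟩
    · intro x
      obtain ⟨v0, hv0⟩ := Quotient.exists_rep x
      refine ⟨⟨v0, hv0⟩, ?_⟩
      intro a ha b hb
      have hr : m.val.2.r a b := fexact (ha.trans hb.symm)
      obtain ⟨w, hw⟩ := m.prop.2 a b hr
      refine ⟨w.toSwitch, ?_, ?_⟩
      · intro z hz
        rw [SGraph.Walk.toSwitch_support] at hz
        show f z = x
        rw [← fsound (hw z hz)]
        exact ha
      · intro e he
        rw [SGraph.Walk.toSwitch_edges] at he
        obtain ⟨p, q, hpq, hps, hqs⟩ := SGraph.Walk.mem_edges_endpoints w e he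
        exact m.prop.1 e p q hpq (m.val.2.iseqv.trans (m.val.2.iseqv.symm (hw p hps)) (hw q hqs))
    · intro x y hxy
      rw [Set.disjoint_left]
      intro v hv hv'
      exact hxy (hv.symm.trans hv')
    · refine ⟨fun ee => ee.prop.choose, ?_, ?_⟩
      · intro p q hpq
        have hp := p.prop.choose_spec
        have hq := q.prop.choose_spec
        have hpq' : p.prop.choose = q.prop.choose := hpq
        apply Subtype.ext
        apply Prod.ext
        · rw [← hp.1, ← hq.1, hpq']
        · rw [← hp.2, ← hq.2, hpq']
      · intro ee x y hxy
        have hspec := ee.prop.choose_spec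
        refine ⟨hspec.2, ?_⟩
        obtain ⟨a, b, hab⟩ := sym2ex (G.ends ee.prop.choose)
        have hxy' : ee.val.1 = s(x, y) := hxy
        have hfab : s(f a, f b) = s(x, y) := by
          rw [← Sym2.map_pair_eq, ← hab, hspec.1, hxy']
        rcases Sym2.eq_iff.1 hfab with ⟨h1, h2⟩ | ⟨h1, h2⟩
        · exact ⟨a, b, hab, h1, h2⟩
        · exact ⟨b, a, by rw [hab, Sym2.eq_swap], h2, h1⟩
  · refine ⟨m.val.1, f, fun e =>
      ⟨(Sym2.map f (G.ends e), (G.switch m.val.1).neg e), e, rfl, rfl⟩, ?_⟩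
    intro e u v he
    constructor
    · show Sym2.map f (G.ends e) = s(f u, f v)
      rw [he, Sym2.map_pair_eq]
    · rfl
end
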